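/- arXiv:2209.03808 — 2 statements merged into one kernel-verified Lean document; each statement's English description precedes it below -/
import Mathlib

section
/- Let M = [[A, B], [C, D]] be an invertible block matrix with A invertible, ‖B‖ ≤ 1 and ‖C‖ ≤ 1 (operator norms), and let S = D - C A^{-1} B. Then ‖S^{-1}‖ ≤ ‖M^{-1}‖ < 4(1 + ‖A^{-1}‖)²(1 + ‖S^{-1}‖). -/
open Matrix
open scoped Matrix.Norms.L2Operator

section aux
variable {m n p q r : Type*} [Fintype m] [Fintype n] [Fintype p] [Fintype q] [Fintype r]
  [DecidableEq m] [DecidableEq n] [DecidableEq p] [DecidableEq q] [DecidableEq r]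

lemma aux_norm_one_le : ‖(1 : Matrix n n ℂ)‖ ≤ 1 := by
  rw [Matrix.cstar_norm_def, _root_.map_one]
  exact ContinuousLinearMap.norm_id_le

lemma aux_embed_mul (e : n → m) (he : Function.Injective e) :
    ((1 : Matrix m m ℂ).submatrix id e)ᴴ * ((1 : Matrix m m ℂ).submatrix id e) = 1 := by
  ext i j
  simp [Matrix.mul_apply, Matrix.one_apply, he.eq_iff, eq_comm]

lemma aux_embed_norm (e : n → m) (he : Function.Injective e) :
    ‖(1 : Matrix m m ℂ).submatrix id e‖ ≤ 1 := by
  have h := Matrix.l2_opNorm_conjTranspose_mul_self ((1 : Matrix m m ℂ).submatrix id e)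
  rw [aux_embed_mul e he] at h
  have h1 : ‖(1 : Matrix n n ℂ)‖ ≤ 1 := aux_norm_one_le
  nlinarith [norm_nonneg ((1 : Matrix m m ℂ).submatrix id e)]

lemma aux_norm_mul3 (P : Matrix m n ℂ) (Q : Matrix n p ℂ) (R : Matrix p q ℂ) :
    ‖P * Q * R‖ ≤ ‖P‖ * ‖Q‖ * ‖R‖ := by
  calc ‖P * Q * R‖ ≤ ‖P * Q‖ * ‖R‖ := Matrix.l2_opNorm_mul _ _
    _ ≤ ‖P‖ * ‖Q‖ * ‖R‖ :=
      mul_le_mul_of_nonneg_right (Matrix.l2_opNorm_mul _ _) (norm_nonneg _)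

lemma aux_norm_mul5 (P : Matrix m n ℂ) (Q : Matrix n p ℂ) (R : Matrix p q ℂ) (S : Matrix q r ℂ)
    (T : Matrix r m ℂ) :
    ‖P * Q * R * S * T‖ ≤ ‖P‖ * ‖Q‖ * ‖R‖ * ‖S‖ * ‖T‖ := by
  calc ‖P * Q * R * S * T‖ ≤ ‖P * Q * R * S‖ * ‖T‖ := Matrix.l2_opNorm_mul _ _
    _ ≤ ‖P * Q * R‖ * ‖S‖ * ‖T‖ :=
      mul_le_mul_of_nonneg_right (Matrix.l2_opNorm_mul _ _) (norm_nonneg _)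
    _ ≤ ‖P‖ * ‖Q‖ * ‖R‖ * ‖S‖ * ‖T‖ :=
      mul_le_mul_of_nonneg_right
        (mul_le_mul_of_nonneg_right (aux_norm_mul3 _ _ _) (norm_nonneg _)) (norm_nonneg _)

end aux

section blocks
variable {d1 d2 : Type*} [Fintype d1] [Fintype d2] [DecidableEq d1] [DecidableEq d2]

local notation "ι₁" => (Matrix.submatrix (1 : Matrix (d1 ⊕ d2) (d1 ⊕ d2) ℂ) id Sum.inl)
local notation "ι₂" => (Matrix.submatrix (1 : Matrix (d1 ⊕ d2) (d1 ⊕ d2) ℂ) id Sum.inr)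

lemma aux_toBlocks₂₂ (N : Matrix (d1 ⊕ d2) (d1 ⊕ d2) ℂ) :
    (ι₂)ᴴ * N * ι₂ = Matrix.toBlocks₂₂ N := by
  ext i j
  simp [Matrix.mul_apply, Matrix.one_apply, Matrix.toBlocks₂₂, Fintype.sum_sum_type]

lemma aux_fromBlocks_decomp (W : Matrix d1 d1 ℂ) (X : Matrix d1 d2 ℂ)
    (Y : Matrix d2 d1 ℂ) (Z : Matrix d2 d2 ℂ) :
    Matrix.fromBlocks W X Y Z =
      ι₁ * W * (ι₁)ᴴ + ι₁ * X * (ι₂)ᴴ + ι₂ * Y * (ι₁)ᴴ + ι₂ * Z * (ι₂)ᴴ := by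
  ext i j
  rcases i with i | i <;> rcases j with j | j <;>
    simp [Matrix.mul_apply, Matrix.one_apply, Fintype.sum_sum_type]

lemma aux_sandwich_le {p q : Type*} [Fintype p] [Fintype q] [DecidableEq p] [DecidableEq q]
    (u : Matrix (d1 ⊕ d2) p ℂ) (v : Matrix (d1 ⊕ d2) q ℂ)
    (hu : ‖u‖ ≤ 1) (hv : ‖v‖ ≤ 1) (P : Matrix p q ℂ) :
    ‖u * P * vᴴ‖ ≤ ‖P‖ := by
  have h := aux_norm_mul3 u P vᴴ
  rw [Matrix.l2_opNorm_conjTranspose] at h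
  refine h.trans ?_
  calc ‖u‖ * ‖P‖ * ‖v‖ ≤ 1 * ‖P‖ * 1 := by gcongr <;> positivity
    _ = ‖P‖ := by ring

lemma aux_norm_fromBlocks_le (W : Matrix d1 d1 ℂ) (X : Matrix d1 d2 ℂ)
    (Y : Matrix d2 d1 ℂ) (Z : Matrix d2 d2 ℂ) :
    ‖Matrix.fromBlocks W X Y Z‖ ≤ ‖W‖ + ‖X‖ + ‖Y‖ + ‖Z‖ := by
  have h1 : ‖(ι₁ : Matrix (d1 ⊕ d2) d1 ℂ)‖ ≤ 1 := aux_embed_norm _ Sum.inl_injective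
  have h2 : ‖(ι₂ : Matrix (d1 ⊕ d2) d2 ℂ)‖ ≤ 1 := aux_embed_norm _ Sum.inr_injective
  rw [aux_fromBlocks_decomp]
  calc ‖ι₁ * W * (ι₁)ᴴ + ι₁ * X * (ι₂)ᴴ + ι₂ * Y * (ι₁)ᴴ + ι₂ * Z * (ι₂)ᴴ‖
      ≤ ‖ι₁ * W * (ι₁)ᴴ‖ + ‖ι₁ * X * (ι₂)ᴴ‖ + ‖ι₂ * Y * (ι₁)ᴴ‖ + ‖ι₂ * Z * (ι₂)ᴴ‖ := by
        refine (norm_add_le _ _).trans (add_le_add_left (norm_add₃_le) _)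
    _ ≤ ‖W‖ + ‖X‖ + ‖Y‖ + ‖Z‖ := by
        exact add_le_add (add_le_add (add_le_add (aux_sandwich_le _ _ h1 h1 W)
          (aux_sandwich_le _ _ h1 h2 X)) (aux_sandwich_le _ _ h2 h1 Y))
          (aux_sandwich_le _ _ h2 h2 Z)

lemma aux_norm_block₂₂_le (N : Matrix (d1 ⊕ d2) (d1 ⊕ d2) ℂ) :
    ‖Matrix.toBlocks₂₂ N‖ ≤ ‖N‖ := by
  have h1 : ‖(ι₂ : Matrix (d1 ⊕ d2) d2 ℂ)‖ ≤ 1 := aux_embed_norm _ Sum.inr_injective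
  rw [← aux_toBlocks₂₂]
  have h := aux_norm_mul3 (ι₂)ᴴ N ι₂
  rw [Matrix.l2_opNorm_conjTranspose] at h
  refine h.trans ?_
  calc ‖(ι₂ : Matrix (d1 ⊕ d2) d2 ℂ)‖ * ‖N‖ * ‖(ι₂ : Matrix (d1 ⊕ d2) d2 ℂ)‖ ≤ 1 * ‖N‖ * 1 := by
        gcongr <;> positivity
    _ = ‖N‖ := by ring

end blocks


/-- Norm estimate from the Schur complement lemma: if `M = [[A,B],[C,D]]` is an
invertible block matrix with `A` invertible, `‖B‖ ≤ 1` and `‖C‖ ≤ 1` (ℓ²-operator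
norms), and `S = D - C A⁻¹ B`, then `‖S⁻¹‖ ≤ ‖M⁻¹‖ < 4 (1 + ‖A⁻¹‖)² (1 + ‖S⁻¹‖)`. -/
theorem schur_complement_inverse_norm
    {d1 d2 : Type*} [Fintype d1] [Fintype d2] [DecidableEq d1] [DecidableEq d2]
    (A : Matrix d1 d1 ℂ) (B : Matrix d1 d2 ℂ) (C : Matrix d2 d1 ℂ) (D : Matrix d2 d2 ℂ)
    (hA : IsUnit A) (hM : IsUnit (Matrix.fromBlocks A B C D))
    (hB : ‖B‖ ≤ 1) (hC : ‖C‖ ≤ 1) :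
    ‖(D - C * A⁻¹ * B)⁻¹‖ ≤ ‖(Matrix.fromBlocks A B C D)⁻¹‖ ∧
      ‖(Matrix.fromBlocks A B C D)⁻¹‖ <
        4 * (1 + ‖A⁻¹‖) ^ 2 * (1 + ‖(D - C * A⁻¹ * B)⁻¹‖) := by
  haveI iA : Invertible A := hA.invertible
  haveI iM : Invertible (Matrix.fromBlocks A B C D) := hM.invertible
  haveI iS : Invertible (D - C * ⅟A * B) := Matrix.invertibleOfFromBlocks₁₁Invertible A B C D
  have hMinv := Matrix.invOf_fromBlocks₁₁_eq A B C D
  simp only [invOf_eq_nonsing_inv] at hMinv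
  -- Part 1
  have h1 : ‖(D - C * A⁻¹ * B)⁻¹‖ ≤ ‖(Matrix.fromBlocks A B C D)⁻¹‖ := by
    have : (D - C * A⁻¹ * B)⁻¹ = Matrix.toBlocks₂₂ (Matrix.fromBlocks A B C D)⁻¹ := by
      rw [hMinv, Matrix.toBlocks_fromBlocks₂₂]
    rw [this]
    exact aux_norm_block₂₂_le _
  refine ⟨h1, ?_⟩
  -- Part 2
  set a := ‖A⁻¹‖ with ha
  set s := ‖(D - C * A⁻¹ * B)⁻¹‖ with hs
  have ha0 : 0 ≤ a := norm_nonneg _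
  have hs0 : 0 ≤ s := norm_nonneg _
  have hb0 : 0 ≤ ‖B‖ := norm_nonneg _
  have hc0 : 0 ≤ ‖C‖ := norm_nonneg _
  have hW : ‖A⁻¹ + A⁻¹ * B * (D - C * A⁻¹ * B)⁻¹ * C * A⁻¹‖ ≤ a + a * ‖B‖ * s * ‖C‖ * a :=
    (norm_add_le _ _).trans (add_le_add_right (aux_norm_mul5 _ _ _ _ _) _)
  have hX : ‖-(A⁻¹ * B * (D - C * A⁻¹ * B)⁻¹)‖ ≤ a * ‖B‖ * s := by
    rw [norm_neg]; exact aux_norm_mul3 _ _ _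
  have hY : ‖-((D - C * A⁻¹ * B)⁻¹ * C * A⁻¹)‖ ≤ s * ‖C‖ * a := by
    rw [norm_neg]; exact aux_norm_mul3 _ _ _
  have hfb := aux_norm_fromBlocks_le
    (A⁻¹ + A⁻¹ * B * (D - C * A⁻¹ * B)⁻¹ * C * A⁻¹)
    (-(A⁻¹ * B * (D - C * A⁻¹ * B)⁻¹))
    (-((D - C * A⁻¹ * B)⁻¹ * C * A⁻¹)) ((D - C * A⁻¹ * B)⁻¹)
  rw [← hMinv] at hfb
  have htot : ‖(Matrix.fromBlocks A B C D)⁻¹‖ ≤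
      (a + a * ‖B‖ * s * ‖C‖ * a) + a * ‖B‖ * s + s * ‖C‖ * a + s := by
    refine hfb.trans ?_
    gcongr
  refine htot.trans_lt ?_
  nlinarith [mul_nonneg ha0 hs0, mul_nonneg (mul_nonneg ha0 ha0) hs0, sq_nonneg (1 + a),
    mul_nonneg ha0 ha0, mul_le_one₀ hB hc0 hC, mul_nonneg hs0 ha0]
end

section
/- Let Λ ⊂ ℤ^d be finite, D the diagonal matrix on ℓ²(Λ) with entries D_n, and Δ_Λ the adjacency matrix Δ(n,n') = δ_{‖n-n'‖₁,1} restricted to Λ. Suppose |D_n| ≥ δ > 0 for all n ∈ Λ and 2dε/δ < 1/2. Then for x, y ∈ Λ with ‖x-y‖₁ > 0, the inverse T^{-1} of T = D + εΔ_Λ satisfies the off-diagonal bound |T^{-1}(x,y)| ≤ 2δ^{-1}(2dεδ^{-1})^{‖x-y‖₁}. -/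
open Matrix

open Matrix
attribute [local instance] Matrix.linftyOpNormedAddCommGroup Matrix.linftyOpNormedRing Matrix.linftyOpNormedSpace

lemma aux_entry_le_norm {S : Type*} [Fintype S] (A : Matrix S S ℂ) (x y : S) :
    ‖A x y‖ ≤ ‖A‖ := by
  rw [linfty_opNorm_def]
  calc ‖A x y‖ ≤ ((∑ j, ‖A x j‖₊ : NNReal) : ℝ) := by
        push_cast
        exact Finset.single_le_sum (f := fun j => ‖A x j‖) (fun j _ => norm_nonneg _)
          (Finset.mem_univ y)
    _ ≤ _ := by
        exact_mod_cast Finset.le_sup (f := fun i => ∑ j, ‖A i j‖₊) (Finset.mem_univ x)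

lemma aux_norm_le_of_rows {S : Type*} [Fintype S] (A : Matrix S S ℂ) (r : ℝ) (hr : 0 ≤ r)
    (h : ∀ i, ∑ j, ‖A i j‖ ≤ r) : ‖A‖ ≤ r := by
  rw [linfty_opNorm_def, ← NNReal.coe_mk r hr, NNReal.coe_le_coe]
  refine Finset.sup_le fun i _ => ?_
  rw [← NNReal.coe_le_coe]
  push_cast
  exact h i

lemma aux_unique_index {d : ℕ} {a b : Fin d → ℤ}
    (h : ∑ i, (a i - b i).natAbs = 1) :
    ∃ i, (a i - b i).natAbs = 1 ∧ ∀ j, j ≠ i → a j = b j := by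
  obtain ⟨i, _, hi⟩ := Finset.exists_ne_zero_of_sum_ne_zero (h ▸ one_ne_zero)
  have hle : (a i - b i).natAbs ≤ 1 := h ▸ Finset.single_le_sum
    (f := fun j => (a j - b j).natAbs) (fun j _ => Nat.zero_le _) (Finset.mem_univ i)
  have h1 : (a i - b i).natAbs = 1 := le_antisymm hle (Nat.one_le_iff_ne_zero.2 hi)
  refine ⟨i, h1, fun j hj => ?_⟩
  have hz : ∑ k ∈ Finset.univ.erase i, (a k - b k).natAbs = 0 := by
    have h2 := h
    rw [← Finset.add_sum_erase Finset.univ (fun k => (a k - b k).natAbs) (Finset.mem_univ i)] at h2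
    omega
  have := (Finset.sum_eq_zero_iff.1 hz) j (Finset.mem_erase.2 ⟨hj, Finset.mem_univ j⟩)
  have := Int.natAbs_eq_zero.1 this
  linarith [sub_eq_zero.1 this]

lemma aux_neighbor_card {d : ℕ} (Λ : Finset (Fin d → ℤ)) (a : {n // n ∈ Λ}) :
    (Finset.univ.filter fun b : {n // n ∈ Λ} =>
        (∑ i, ((a : Fin d → ℤ) i - (b : Fin d → ℤ) i).natAbs) = 1).card ≤ 2 * d := by
  classical
  rcases Nat.eq_zero_or_pos d with rfl | hd
  · simp
  have key : (Finset.univ.filter fun b : {n // n ∈ Λ} =>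
        (∑ i, ((a : Fin d → ℤ) i - (b : Fin d → ℤ) i).natAbs) = 1).card ≤
      (Finset.univ : Finset (Fin d × Bool)).card := by
    refine Finset.card_le_card_of_injOn
      (fun b => if h : ∃ i, (a : Fin d → ℤ) i ≠ (b : Fin d → ℤ) i
        then (h.choose, decide ((b : Fin d → ℤ) h.choose = (a : Fin d → ℤ) h.choose + 1))
        else (⟨0, hd⟩, false))
      (fun _ _ => Finset.mem_univ _) ?_
    intro b hb b' hb' heq
    simp only [Finset.mem_coe, Finset.mem_filter] at hb hb'
    obtain ⟨i, hi1, hiu⟩ := aux_unique_index hb.2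
    obtain ⟨i', hi1', hiu'⟩ := aux_unique_index hb'.2
    have hne : (a : Fin d → ℤ) i ≠ (b : Fin d → ℤ) i := by
      intro hc; rw [hc, sub_self] at hi1; simp at hi1
    have hne' : (a : Fin d → ℤ) i' ≠ (b' : Fin d → ℤ) i' := by
      intro hc; rw [hc, sub_self] at hi1'; simp at hi1'
    have hex : ∃ j, (a : Fin d → ℤ) j ≠ (b : Fin d → ℤ) j := ⟨i, hne⟩
    have hex' : ∃ j, (a : Fin d → ℤ) j ≠ (b' : Fin d → ℤ) j := ⟨i', hne'⟩
    simp only at heq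
    rw [dif_pos hex, dif_pos hex'] at heq
    have hci : hex.choose = i := by
      by_contra hc
      exact hex.choose_spec (hiu _ hc)
    have hci' : hex'.choose = i' := by
      by_contra hc
      exact hex'.choose_spec (hiu' _ hc)
    rw [hci] at heq
    rw [hci'] at heq
    obtain ⟨hii, hdec⟩ := Prod.ext_iff.1 heq
    simp only at hii hdec
    subst hii
    rw [decide_eq_decide] at hdec
    -- values at i
    have hvals : (b : Fin d → ℤ) i = (b' : Fin d → ℤ) i := by
      rcases Int.natAbs_eq_iff.1 hi1 with h1 | h1 <;>
      rcases Int.natAbs_eq_iff.1 hi1' with h2 | h2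
      · omega
      · exfalso
        have e2 : (b' : Fin d → ℤ) i = (a : Fin d → ℤ) i + 1 := by omega
        have := hdec.2 e2
        omega
      · exfalso
        have e1 : (b : Fin d → ℤ) i = (a : Fin d → ℤ) i + 1 := by omega
        have := hdec.1 e1
        omega
      · omega
    refine Subtype.ext (funext fun j => ?_)
    by_cases hji : j = i
    · rw [hji]; exact hvals
    · rw [← hiu j hji, hiu' j hji]
  simpa [mul_comm] using key

lemma aux_triangle {d : ℕ} (a b c : Fin d → ℤ) :
    ∑ i, (a i - c i).natAbs ≤ ∑ i, (a i - b i).natAbs + ∑ i, (b i - c i).natAbs := by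
  rw [← Finset.sum_add_distrib]
  refine Finset.sum_le_sum fun i _ => ?_
  have h : a i - c i = (a i - b i) + (b i - c i) := by ring
  rw [h]
  exact Int.natAbs_add_le _ _


set_option maxHeartbeats 1000000 in
/-- Off-diagonal decay via Neumann series: on a finite set `Λ ⊂ ℤ^d`, let
`T = D + ε Δ_Λ` with `D` diagonal, `|D_n| ≥ δ > 0`, `Δ_Λ` the ℓ¹-nearest-neighbor
adjacency matrix, and `2dε/δ < 1/2`. Then for `x ≠ y`,
`|T⁻¹(x,y)| ≤ 2 δ⁻¹ (2dε δ⁻¹)^{‖x-y‖₁}`. -/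
theorem neumann_offdiagonal_decay
    {d : ℕ} (Λ : Finset (Fin d → ℤ)) (Dv : (Fin d → ℤ) → ℂ) (δ ε : ℝ)
    (hδ : 0 < δ) (hD : ∀ n ∈ Λ, δ ≤ ‖Dv n‖)
    (hε : 0 < ε) (hsmall : 2 * d * ε / δ < 1 / 2) :
    ∀ x y : {n // n ∈ Λ},
      0 < ∑ i, ((x : Fin d → ℤ) i - (y : Fin d → ℤ) i).natAbs →
      ‖
          (((Matrix.diagonal (fun n : {n // n ∈ Λ} => Dv n) +
              (ε : ℂ) • Matrix.of (fun n n' : {n // n ∈ Λ} =>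
                if (∑ i, ((n : Fin d → ℤ) i - (n' : Fin d → ℤ) i).natAbs) = 1
                then (1 : ℂ) else 0))⁻¹) x y)‖ ≤
        2 * δ⁻¹ * (2 * d * ε * δ⁻¹) ^
          (∑ i, ((x : Fin d → ℤ) i - (y : Fin d → ℤ) i).natAbs) := by
  classical
  set S := {n // n ∈ Λ} with hS
  set Δm : Matrix S S ℂ := Matrix.of (fun n n' : S =>
      if (∑ i, ((n : Fin d → ℤ) i - (n' : Fin d → ℤ) i).natAbs) = 1
      then (1 : ℂ) else 0) with hΔm
  set Dm : Matrix S S ℂ := Matrix.diagonal (fun n : S => Dv n) with hDm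
  intro x y hxy
  set m := ∑ i, ((x : Fin d → ℤ) i - (y : Fin d → ℤ) i).natAbs with hm
  set r : ℝ := 2 * d * ε * δ⁻¹ with hr
  -- basic numerics
  have hr2 : r < 1 / 2 := by
    rw [hr, ← div_eq_mul_inv]; exact hsmall
  have hr0 : 0 ≤ r := by
    have : (0:ℝ) ≤ 2 * d * ε := by positivity
    rw [hr]; positivity
  have hr1 : r < 1 := by linarith
  have hne : ∀ a : S, Dv (a : Fin d → ℤ) ≠ 0 := by
    intro a h
    have := hD a a.2
    rw [h] at this
    simp at this
    linarith
  have habs : ∀ a : S, (‖Dv (a : Fin d → ℤ)‖)⁻¹ ≤ δ⁻¹ := fun a =>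
    inv_anti₀ hδ (hD a a.2)
  let Dinv : Matrix S S ℂ := Matrix.diagonal (fun n : S => (Dv (n : Fin d → ℤ))⁻¹)
  let C : Matrix S S ℂ := -((ε : ℂ) • (Dinv * Δm))
  have hCentry : ∀ a b : S, C a b =
      -((ε : ℂ) * ((Dv (a : Fin d → ℤ))⁻¹ *
        (if (∑ i, ((a : Fin d → ℤ) i - (b : Fin d → ℤ) i).natAbs) = 1 then (1:ℂ) else 0))) := by
    intro a b
    show -((ε : ℂ) • (Dinv * Δm)) a b = _
    simp only [Matrix.neg_apply, Matrix.smul_apply, Matrix.diagonal_mul, smul_eq_mul,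
      Matrix.of_apply, hΔm, Dinv]
  -- norm bound
  have hCnorm : ‖C‖ ≤ r := by
    refine aux_norm_le_of_rows C r hr0 fun a => ?_
    have hrow : ∀ b : S, ‖C a b‖ =
        (if (∑ i, ((a : Fin d → ℤ) i - (b : Fin d → ℤ) i).natAbs) = 1
          then ε * (‖Dv (a : Fin d → ℤ)‖)⁻¹ else 0) := by
      intro b
      rw [hCentry a b]
      split
      · simp [norm_mul, norm_inv, Complex.norm_real, abs_of_pos hε]
      · simp
    calc ∑ b, ‖C a b‖
        = ∑ b : S, (if (∑ i, ((a : Fin d → ℤ) i - (b : Fin d → ℤ) i).natAbs) = 1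
            then ε * (‖Dv (a : Fin d → ℤ)‖)⁻¹ else 0) :=
          Finset.sum_congr rfl fun b _ => hrow b
      _ = (Finset.univ.filter fun b : S =>
            (∑ i, ((a : Fin d → ℤ) i - (b : Fin d → ℤ) i).natAbs) = 1).card •
            (ε * (‖Dv (a : Fin d → ℤ)‖)⁻¹) := by
          rw [Finset.sum_ite, Finset.sum_const, Finset.sum_const_zero, add_zero]
      _ ≤ (2 * d : ℕ) • (ε * δ⁻¹) := by
          have h1 := aux_neighbor_card Λ a
          have h2 : ε * (‖Dv (a : Fin d → ℤ)‖)⁻¹ ≤ ε * δ⁻¹ :=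
            mul_le_mul_of_nonneg_left (habs a) hε.le
          have h3 : (0:ℝ) ≤ ε * (‖Dv (a : Fin d → ℤ)‖)⁻¹ := by positivity
          calc _ ≤ ((Finset.univ.filter fun b : S =>
                (∑ i, ((a : Fin d → ℤ) i - (b : Fin d → ℤ) i).natAbs) = 1).card : ℕ) •
                (ε * δ⁻¹) := smul_le_smul_of_nonneg_left h2 (Nat.zero_le _) |>.trans_eq rfl
            _ ≤ _ := by
                rw [nsmul_eq_mul, nsmul_eq_mul]
                have : (0:ℝ) ≤ ε * δ⁻¹ := by positivity
                exact mul_le_mul_of_nonneg_right (by exact_mod_cast h1) this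
      _ = r := by
          rw [nsmul_eq_mul, hr]
          push_cast
          ring
  have hC1 : ‖C‖ < 1 := lt_of_le_of_lt hCnorm hr1
  -- factorization T = Dm * (1 - C)
  have hDDinv : Dm * Dinv = 1 := by
    rw [hDm, Matrix.diagonal_mul_diagonal]
    have : (fun n : S => Dv (n : Fin d → ℤ) * (Dv (n : Fin d → ℤ))⁻¹) = fun _ => (1:ℂ) :=
      funext fun n => mul_inv_cancel₀ (hne n)
    rw [this, Matrix.diagonal_one]
  have hTfac : Dm + (ε : ℂ) • Δm = Dm * (1 - C) := by
    rw [mul_sub, mul_one]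
    have : Dm * C = -((ε : ℂ) • Δm) := by
      show Dm * -((ε : ℂ) • (Dinv * Δm)) = _
      rw [Matrix.mul_neg, Matrix.mul_smul, ← Matrix.mul_assoc, hDDinv, Matrix.one_mul]
    rw [this, sub_neg_eq_add]
  have hsumC : Summable (fun i : ℕ => C ^ i) := summable_geometric_of_norm_lt_one hC1
  have hgeom : (1 - C) * ∑' i : ℕ, C ^ i = 1 := mul_neg_geom_series C hC1
  have hTM : (Dm + (ε : ℂ) • Δm) * ((∑' i : ℕ, C ^ i) * Dinv) = 1 := by
    rw [hTfac, Matrix.mul_assoc, ← Matrix.mul_assoc (1 - C), hgeom, Matrix.one_mul, hDDinv]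
  have hinv : (Dm + (ε : ℂ) • Δm)⁻¹ = (∑' i : ℕ, C ^ i) * Dinv :=
    Matrix.inv_eq_right_inv hTM
  -- the entry continuous linear map
  let E : Matrix S S ℂ →ₗ[ℂ] ℂ :=
    { toFun := fun A => A x y, map_add' := fun _ _ => rfl, map_smul' := fun _ _ => rfl }
  let Ec : Matrix S S ℂ →L[ℂ] ℂ :=
    E.mkContinuous 1 (fun A => by rw [one_mul]; exact aux_entry_le_norm A x y)
  have hEc : ∀ A : Matrix S S ℂ, Ec A = A x y := fun A => rfl
  have hentry : ((∑' i : ℕ, C ^ i) * Dinv) x y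
      = ∑' i : ℕ, ((C ^ i) x y * (Dv (y : Fin d → ℤ))⁻¹) := by
    rw [Matrix.mul_diagonal]
    rw [tsum_mul_right]
    congr 1
    exact ContinuousLinearMap.map_tsum Ec hsumC
  -- vanishing of low powers
  have hvanish : ∀ (i : ℕ) (a b : S),
      i < (∑ j, ((a : Fin d → ℤ) j - (b : Fin d → ℤ) j).natAbs) → (C ^ i) a b = 0 := by
    intro i
    induction i with
    | zero =>
      intro a b hab
      rw [pow_zero]
      refine Matrix.one_apply_ne fun h => ?_
      subst h
      simp at hab
    | succ i ih =>
      intro a b hab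
      rw [pow_succ']
      rw [Matrix.mul_apply]
      refine Finset.sum_eq_zero fun z _ => ?_
      by_cases hz : (∑ j, ((a : Fin d → ℤ) j - (z : Fin d → ℤ) j).natAbs) = 1
      · have htri := aux_triangle (a : Fin d → ℤ) (z : Fin d → ℤ) (b : Fin d → ℤ)
        have : i < ∑ j, ((z : Fin d → ℤ) j - (b : Fin d → ℤ) j).natAbs := by omega
        rw [ih z b this, mul_zero]
      · rw [hCentry a z, if_neg hz, mul_zero, mul_zero, neg_zero, zero_mul]
  -- summability of entries
  have hsg : Summable (fun i : ℕ => (C ^ i) x y * (Dv (y : Fin d → ℤ))⁻¹) := by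
    have h1 : Summable (fun i : ℕ => Ec (C ^ i)) := hsumC.map Ec.toLinearMap.toAddMonoidHom Ec.continuous
    exact h1.mul_right _
  -- per-term bound for shifted indices
  have hterm : ∀ i : ℕ, 0 < i → ‖(C ^ i) x y * (Dv (y : Fin d → ℤ))⁻¹‖ ≤ δ⁻¹ * r ^ i := by
    intro i hi
    rw [norm_mul]
    have h1 : ‖(C ^ i) x y‖ ≤ r ^ i := by
      calc ‖(C ^ i) x y‖ ≤ ‖C ^ i‖ := aux_entry_le_norm _ x y
        _ ≤ ‖C‖ ^ i := norm_pow_le' C hi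
        _ ≤ r ^ i := pow_le_pow_left₀ (norm_nonneg _) hCnorm i
    have h2 : ‖(Dv (y : Fin d → ℤ))⁻¹‖ ≤ δ⁻¹ := by
      rw [norm_inv]
      exact habs y
    calc ‖(C ^ i) x y‖ * ‖(Dv (y : Fin d → ℤ))⁻¹‖ ≤ r ^ i * δ⁻¹ :=
        mul_le_mul h1 h2 (norm_nonneg _) (by positivity)
      _ = δ⁻¹ * r ^ i := mul_comm _ _
  -- split the series
  have hsplit := Summable.sum_add_tsum_nat_add (f := fun i : ℕ => (C ^ i) x y * (Dv (y : Fin d → ℤ))⁻¹) m hsg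
  have hzero : ∑ i ∈ Finset.range m, ((C ^ i) x y * (Dv (y : Fin d → ℤ))⁻¹) = 0 :=
    Finset.sum_eq_zero fun i hi => by
      rw [hvanish i x y (Finset.mem_range.1 hi), zero_mul]
  have heq2 : (∑' i : ℕ, ((C ^ i) x y * (Dv (y : Fin d → ℤ))⁻¹))
      = ∑' i : ℕ, ((C ^ (i + m)) x y * (Dv (y : Fin d → ℤ))⁻¹) := by
    rw [← hsplit, hzero, zero_add]
  -- majorant
  have hmaj : Summable (fun i : ℕ => δ⁻¹ * r ^ m * r ^ i) :=
    (summable_geometric_of_lt_one hr0 hr1).mul_left _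
  have hbnd : ∀ i : ℕ, ‖(C ^ (i + m)) x y * (Dv (y : Fin d → ℤ))⁻¹‖ ≤ δ⁻¹ * r ^ m * r ^ i := by
    intro i
    have := hterm (i + m) (lt_of_lt_of_le hxy (Nat.le_add_left m i))
    calc ‖(C ^ (i + m)) x y * (Dv (y : Fin d → ℤ))⁻¹‖ ≤ δ⁻¹ * r ^ (i + m) := this
      _ = δ⁻¹ * r ^ m * r ^ i := by rw [pow_add]; ring
  -- final chain
  rw [hinv, hentry, heq2]
  calc ‖∑' i : ℕ, ((C ^ (i + m)) x y * (Dv (y : Fin d → ℤ))⁻¹)‖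
      ≤ ∑' i : ℕ, ‖(C ^ (i + m)) x y * (Dv (y : Fin d → ℤ))⁻¹‖ :=
        norm_tsum_le_tsum_norm (Summable.of_nonneg_of_le (fun _ => norm_nonneg _) hbnd hmaj)
    _ ≤ ∑' i : ℕ, δ⁻¹ * r ^ m * r ^ i :=
        Summable.tsum_le_tsum hbnd (Summable.of_nonneg_of_le (fun _ => norm_nonneg _) hbnd hmaj) hmaj
    _ = δ⁻¹ * r ^ m * (1 - r)⁻¹ := by
        rw [tsum_mul_left, tsum_geometric_of_lt_one hr0 hr1]
    _ ≤ 2 * δ⁻¹ * r ^ m := by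
        have h1 : (1 - r)⁻¹ ≤ 2 := by
          rw [inv_le_comm₀ (by linarith) (by norm_num)]
          linarith
        have h2 : (0:ℝ) ≤ δ⁻¹ * r ^ m := by positivity
        calc δ⁻¹ * r ^ m * (1 - r)⁻¹ ≤ δ⁻¹ * r ^ m * 2 := mul_le_mul_of_nonneg_left h1 h2
          _ = 2 * δ⁻¹ * r ^ m := by ring
end
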